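/- If Φ = {φ_i}_{i=1}^N spans ℂ^M, x, y ∈ ℂ^M, all measurements ⟨x,φ_i⟩ are nonzero, |⟨x,φ_i⟩| = |⟨y,φ_i⟩| for all i, and all relative phases agree (i.e. conj(⟨x,φ_i⟩)⟨x,φ_j⟩ / |conj(⟨x,φ_i⟩)⟨x,φ_j⟩| = conj(⟨y,φ_i⟩)⟨y,φ_j⟩ / |conj(⟨y,φ_i⟩)⟨y,φ_j⟩| for all pairs i ≠ j), then y = e^{iθ} x for some θ ∈ ℝ. -/

import Mathlib

/-- If `Φ` spans `ℂ^M`, all measurements of `x` are nonzero, the magnitudes of the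
measurements of `x` and `y` agree, and all pairwise relative phases agree, then
`y = e^{iθ} x` for some `θ`. Here the paper's `⟨x, φ⟩` is Mathlib's `inner φ x`. -/
theorem magnitudes_and_relative_phases_determine (M N : ℕ)
    (φ : Fin N → EuclideanSpace ℂ (Fin M))
    (hspan : Submodule.span ℂ (Set.range φ) = ⊤)
    (x y : EuclideanSpace ℂ (Fin M))
    (hx : ∀ i, (inner ℂ (φ i) x : ℂ) ≠ 0)
    (hmag : ∀ i, ‖(inner ℂ (φ i) x : ℂ)‖ = ‖(inner ℂ (φ i) y : ℂ)‖)
    (hrel : ∀ i j, i ≠ j →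
      (starRingEnd ℂ) (inner ℂ (φ i) x : ℂ) * (inner ℂ (φ j) x : ℂ) /
          (‖(starRingEnd ℂ) (inner ℂ (φ i) x : ℂ) * (inner ℂ (φ j) x : ℂ)‖ : ℂ) =
        (starRingEnd ℂ) (inner ℂ (φ i) y : ℂ) * (inner ℂ (φ j) y : ℂ) /
          (‖(starRingEnd ℂ) (inner ℂ (φ i) y : ℂ) * (inner ℂ (φ j) y : ℂ)‖ : ℂ)) :
    ∃ θ : ℝ, y = Complex.exp (θ * Complex.I) • x := by
  have key : ∀ i j, (starRingEnd ℂ) (inner ℂ (φ i) x : ℂ) * (inner ℂ (φ j) x : ℂ)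
      = (starRingEnd ℂ) (inner ℂ (φ i) y : ℂ) * (inner ℂ (φ j) y : ℂ) := by
    intro i j
    by_cases hij : i = j
    · subst hij
      rw [mul_comm, mul_comm _ ((inner ℂ (φ i) y : ℂ)), Complex.mul_conj, Complex.mul_conj]
      norm_cast
      rw [Complex.normSq_eq_norm_sq, Complex.normSq_eq_norm_sq, hmag i]
    · have h := hrel i j hij
      have hden : ‖(starRingEnd ℂ) (inner ℂ (φ i) x : ℂ) * (inner ℂ (φ j) x : ℂ)‖
          = ‖(starRingEnd ℂ) (inner ℂ (φ i) y : ℂ) * (inner ℂ (φ j) y : ℂ)‖ := by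
        rw [norm_mul, norm_mul, RCLike.norm_conj, RCLike.norm_conj, hmag i, hmag j]
      have hne : (‖(starRingEnd ℂ) (inner ℂ (φ i) x : ℂ) * (inner ℂ (φ j) x : ℂ)‖ : ℂ) ≠ 0 := by
        simp only [ne_eq, Complex.ofReal_eq_zero, norm_eq_zero, mul_eq_zero,
          map_eq_zero, not_or]
        exact ⟨hx i, hx j⟩
      rw [← hden] at h
      have := (div_eq_div_iff hne hne).mp h
      exact mul_right_cancel₀ hne this
  rcases Nat.eq_zero_or_pos N with hN | hN
  · subst hN
    have hrange : Set.range φ = ∅ := by simp [Set.range_eq_empty]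
    rw [hrange, Submodule.span_empty] at hspan
    have hx0 : x = 0 := by
      have : x ∈ (⊥ : Submodule ℂ (EuclideanSpace ℂ (Fin M))) := hspan ▸ Submodule.mem_top
      simpa using this
    have hy0 : y = 0 := by
      have : y ∈ (⊥ : Submodule ℂ (EuclideanSpace ℂ (Fin M))) := hspan ▸ Submodule.mem_top
      simpa using this
    exact ⟨0, by simp [hx0, hy0]⟩
  · have i0 : Fin N := ⟨0, hN⟩
    have hb0 : (inner ℂ (φ i0) y : ℂ) ≠ 0 := by
      intro h
      apply hx i0
      have := hmag i0
      rw [h, norm_zero, norm_eq_zero] at this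
      exact this
    have hcb0 : (starRingEnd ℂ) (inner ℂ (φ i0) y : ℂ) ≠ 0 :=
      fun h => hb0 (by simpa using congrArg (starRingEnd ℂ) h)
    set u : ℂ := (starRingEnd ℂ) (inner ℂ (φ i0) x : ℂ) / (starRingEnd ℂ) (inner ℂ (φ i0) y : ℂ)
      with hu
    have hbu : ∀ j, (inner ℂ (φ j) y : ℂ) = u * (inner ℂ (φ j) x : ℂ) := by
      intro j
      have h := key i0 j
      rw [hu, div_mul_eq_mul_div, eq_div_iff hcb0]
      linear_combination -h
    have hnormu : ‖u‖ = 1 := by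
      rw [hu, norm_div, RCLike.norm_conj, RCLike.norm_conj, ← hmag i0]
      exact div_self (norm_ne_zero_iff.mpr (hx i0))
    have hyx : y = u • x := by
      have horth : ∀ j, (inner ℂ (φ j) (y - u • x) : ℂ) = 0 := by
        intro j
        rw [inner_sub_right, inner_smul_right, hbu j, sub_self]
      have hmem : y - u • x ∈ (Submodule.span ℂ (Set.range φ))ᗮ := by
        rw [Submodule.mem_orthogonal]
        intro v hv
        induction hv using Submodule.span_induction with
        | mem v hv => obtain ⟨j, rfl⟩ := hv; exact horth j
        | zero => simp
        | add v w _ _ h1 h2 => rw [inner_add_left, h1, h2, add_zero]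
        | smul c v _ h1 => rw [inner_smul_left, h1, mul_zero]
      rw [hspan, Submodule.top_orthogonal_eq_bot, Submodule.mem_bot, sub_eq_zero] at hmem
      exact hmem
    refine ⟨Complex.arg u, ?_⟩
    have harg : Complex.exp (↑(Complex.arg u) * Complex.I) = u := by
      have h := Complex.norm_mul_exp_arg_mul_I u
      rwa [show ‖u‖ = 1 from hnormu,
        Complex.ofReal_one, one_mul] at h
    rw [harg, hyx]
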